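/- Let N be an n×n nilpotent complex matrix such that for every k with 1 ≤ k ≤ n−1 the first k columns of N^{n−k} are linearly independent. Then there exist a nilpotent endomorphism basis w_1,...,w_n of ℂ^n adapted to the full flag (i.e. span{w_1,...,w_k} = span{e_1,...,e_k} for all k) such that N·w_x − w_{x+1} ∈ span{w_j : j > x+1} for x < n and N·w_n = 0. -/

import Mathlib

open Submodule Module Set

lemma nilp_pow_card {n : ℕ} {N : Matrix (Fin n) (Fin n) ℂ} (hN : IsNilpotent N) : N ^ n = 0 := by
  have h1 : N.charpoly - Polynomial.X ^ (Fintype.card (Fin n)) = 0 :=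
    (Matrix.isNilpotent_charpoly_sub_pow_of_isNilpotent hN).eq_zero
  have h2 : N.charpoly = Polynomial.X ^ n := by
    have := sub_eq_zero.mp h1
    simpa using this
  have h3 := N.aeval_self_charpoly
  rw [h2] at h3
  simpa using h3

/-- existence of an adapted triangular basis for a generic nilpotent matrix. -/
theorem stmt_3 (n : ℕ) (N : Matrix (Fin n) (Fin n) ℂ) (hN : IsNilpotent N)
    (hgen : ∀ k : ℕ, (hk1 : 1 ≤ k) → (hk2 : k ≤ n - 1) →
      LinearIndependent ℂ
        (fun j : Fin k => fun i : Fin n =>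
          (N ^ (n - k)) i ⟨j.1, by have := j.isLt; omega⟩)) :
    ∃ w : Basis (Fin n) ℂ (Fin n → ℂ),
      (∀ k : ℕ, k ≤ n →
        Submodule.span ℂ {v : Fin n → ℂ | ∃ j : Fin n, j.1 < k ∧ v = w j} =
        Submodule.span ℂ {v : Fin n → ℂ | ∃ j : Fin n, j.1 < k ∧ v = Pi.single j 1}) ∧
      (∀ x : Fin n, (hx : x.1 + 1 < n) →
        N.mulVec (w x) - w ⟨x.1 + 1, hx⟩ ∈
          Submodule.span ℂ {v : Fin n → ℂ | ∃ j : Fin n, x.1 + 1 < j.1 ∧ v = w j}) ∧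
      (∀ x : Fin n, x.1 + 1 = n → N.mulVec (w x) = 0) := by
  classical
  have hNn : N ^ n = 0 := nilp_pow_card hN
  rcases Nat.eq_zero_or_pos n with hn | hn
  · subst hn
    haveI : Subsingleton (Fin 0 → ℂ) := ⟨fun a b => funext fun x => x.elim0⟩
    refine ⟨Basis.empty _, ?_, fun x => x.elim0, fun x => x.elim0⟩
    intro k hk
    exact Subsingleton.elim _ _
  haveI : Nonempty (Fin n) := ⟨⟨0, hn⟩⟩
  set e0 : Fin n → ℂ := Pi.single ⟨0, hn⟩ 1 with he0
  set u : ℕ → (Fin n → ℂ) := fun i => (N ^ i).mulVec e0 with hu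
  have hpow0 : ∀ m, n ≤ m → N ^ m = 0 := by
    intro m hm
    have h : N ^ m = N ^ (m - n) * N ^ n := by rw [← pow_add]; congr 1; omega
    rw [h, hNn, mul_zero]
  have huch : ∀ (a i : ℕ), (N ^ a).mulVec (u i) = (N ^ (a + i)).mulVec e0 := by
    intro a i
    rw [hu]
    simp only [Matrix.mulVec_mulVec, ← pow_add]
  have huN1 : ∀ a : ℕ, N.mulVec (u a) = u (a + 1) := by
    intro a
    have h := huch 1 a
    rw [pow_one] at h
    rw [h, hu]
    simp only []
    rw [Nat.add_comm 1 a]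
  have hu_last : u (n - 1) ≠ 0 := by
    rcases eq_or_lt_of_le (Nat.succ_le_of_lt hn) with h1 | h1
    · rw [hu]
      simp only []
      rw [show n - 1 = 0 from by omega, pow_zero, Matrix.one_mulVec, he0]
      intro h
      have := congrFun h ⟨0, hn⟩
      simp at this
    · have hne := (hgen 1 le_rfl (by omega)).ne_zero 0
      have h2 : u (n - 1) = fun i => (N ^ (n - 1)) i ⟨0, hn⟩ := by
        rw [hu]
        simp only [he0, Matrix.mulVec_single, mul_one, MulOpposite.op_one, one_smul]
        rfl
      rw [h2]
      exact hne
  have hu_li : LinearIndependent ℂ (fun i : Fin n => u i.1) := by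
    rw [Fintype.linearIndependent_iff]
    intro c hc
    have key : ∀ m : ℕ, ∀ i : Fin n, i.1 < m → c i = 0 := by
      intro m
      induction m with
      | zero => intro i h; omega
      | succ m ih =>
        intro i him
        rcases Nat.lt_or_ge i.1 m with h | h
        · exact ih i h
        have him' : i.1 = m := by omega
        have hin := i.2
        have h2 : ∑ j : Fin n, c j • (N ^ (n - 1 - m)).mulVec (u j.1) = 0 := by
          have h2' := congrArg (fun v => (N ^ (n - 1 - m)).mulVecLin v) hc
          simpa [map_sum, Matrix.mulVecLin_apply] using h2'
        have h3 : ∑ j : Fin n, c j • (N ^ (n - 1 - m + j.1)).mulVec e0 = 0 := by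
          rw [← h2]
          apply Finset.sum_congr rfl
          intro j _
          rw [huch]
        rw [Finset.sum_eq_single i] at h3
        · rw [show n - 1 - m + i.1 = n - 1 from by omega] at h3
          rcases smul_eq_zero.mp h3 with h5 | h5
          · exact h5
          · exact absurd h5 hu_last
        · intro j _ hji
          have hjn := j.2
          rcases Nat.lt_or_ge j.1 m with hj | hj
          · rw [ih j hj, zero_smul]
          · have hjm : j.1 ≠ m := fun hh => hji (Fin.ext (by omega))
            rw [hpow0 _ (by omega), Matrix.zero_mulVec, smul_zero]
        · intro hni
          exact absurd (Finset.mem_univ i) hni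
    intro i
    exact key n i i.2
  set Fk : ℕ → Submodule ℂ (Fin n → ℂ) :=
    fun k => span ℂ {v : Fin n → ℂ | ∃ j : Fin n, j.1 < k ∧ v = Pi.single j 1} with hFk
  set U : ℕ → Submodule ℂ (Fin n → ℂ) :=
    fun m => span ℂ {v : Fin n → ℂ | ∃ i : Fin n, m ≤ i.1 ∧ v = u i.1} with hU
  have hFk_mono : ∀ k k' : ℕ, k ≤ k' → Fk k ≤ Fk k' := by
    intro k k' h
    apply span_mono
    rintro v ⟨j, hj, rfl⟩
    exact ⟨j, by omega, rfl⟩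
  have hsetF : ∀ k : ℕ, (hk : k ≤ n) →
      {v : Fin n → ℂ | ∃ j : Fin n, j.1 < k ∧ v = Pi.single j 1} =
        Set.range (fun j : Fin k => (Pi.single (Fin.castLE hk j) 1 : Fin n → ℂ)) := by
    intro k hk
    ext v
    constructor
    · rintro ⟨j, hj, rfl⟩
      exact ⟨⟨j.1, hj⟩, rfl⟩
    · rintro ⟨j, rfl⟩
      exact ⟨Fin.castLE hk j, j.2, rfl⟩
  have hliF : ∀ k : ℕ, (hk : k ≤ n) →
      LinearIndependent ℂ (fun j : Fin k => (Pi.single (Fin.castLE hk j) 1 : Fin n → ℂ)) := by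
    intro k hk
    have hb := (Pi.basisFun ℂ (Fin n)).linearIndependent
    have h2 := hb.comp (Fin.castLE hk) (Fin.castLE_injective hk)
    have h3 : (⇑(Pi.basisFun ℂ (Fin n)) ∘ Fin.castLE hk) =
        fun j : Fin k => (Pi.single (Fin.castLE hk j) 1 : Fin n → ℂ) := by
      funext j
      simp [Pi.basisFun_apply]
    rwa [h3] at h2
  have hFk_rank : ∀ k : ℕ, k ≤ n → finrank ℂ (Fk k) = k := by
    intro k hk
    rw [hFk]
    simp only []
    show finrank ℂ (span ℂ {v : Fin n → ℂ | ∃ j : Fin n, j.1 < k ∧ v = Pi.single j 1}) = k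
    rw [hsetF k hk, finrank_span_eq_card (hliF k hk), Fintype.card_fin]
  have hU_rank : ∀ m : ℕ, m ≤ n → finrank ℂ (U m) = n - m := by
    intro m hm
    have hset : {v : Fin n → ℂ | ∃ i : Fin n, m ≤ i.1 ∧ v = u i.1} =
        Set.range (fun j : Fin (n - m) => u (m + j.1)) := by
      ext v
      constructor
      · rintro ⟨i, hi, rfl⟩
        have hi2 := i.2
        refine ⟨⟨i.1 - m, by omega⟩, ?_⟩
        show u (m + (i.1 - m)) = u i.1
        rw [show m + (i.1 - m) = i.1 from by omega]
      · rintro ⟨j, rfl⟩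
        have hj2 := j.2
        exact ⟨⟨m + j.1, by omega⟩, by show m ≤ m + j.1; omega, rfl⟩
    have hli : LinearIndependent ℂ (fun j : Fin (n - m) => u (m + j.1)) := by
      have := hu_li.comp (fun j : Fin (n - m) => (⟨m + j.1, by omega⟩ : Fin n))
        (fun a b hab => by
          have h : m + a.1 = m + b.1 := congrArg Fin.val hab
          exact Fin.ext (by omega))
      exact this
    rw [hU]
    simp only []
    show finrank ℂ (span ℂ {v : Fin n → ℂ | ∃ i : Fin n, m ≤ i.1 ∧ v = u i.1}) = n - m
    rw [hset, finrank_span_eq_card hli, Fintype.card_fin]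
  have hUker : ∀ k : ℕ, k ≤ n → ∀ v ∈ U k, (N ^ (n - k)).mulVec v = 0 := by
    intro k hk v hv
    have hle : U k ≤ LinearMap.ker (N ^ (n - k)).mulVecLin := by
      rw [hU]
      apply span_le.2
      rintro x ⟨i, hi, rfl⟩
      simp only [SetLike.mem_coe, LinearMap.mem_ker, Matrix.mulVecLin_apply]
      rw [huch, hpow0 (n - k + i.1) (by omega), Matrix.zero_mulVec]
    have := hle hv
    simpa using this
  have hFU : ∀ k : ℕ, 1 ≤ k → k ≤ n - 1 → Fk k ⊓ U k = ⊥ := by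
    intro k hk1 hk2
    rw [eq_bot_iff]
    rintro v ⟨hvF, hvU⟩
    have hvF' : v ∈ span ℂ
        (Set.range (fun j : Fin k => (Pi.single (Fin.castLE (show k ≤ n by omega) j) 1 : Fin n → ℂ))) := by
      rw [← hsetF k (by omega)]
      exact hvF
    obtain ⟨c, hc⟩ := mem_span_range_iff_exists_fun ℂ |>.mp hvF'
    have h0 : (N ^ (n - k)).mulVec v = 0 := hUker k (by omega) v hvU
    have h1 : ∑ j : Fin k, c j • (fun i : Fin n => (N ^ (n - k)) i ⟨j.1, by have := j.isLt; omega⟩) = 0 := by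
      have e1 : (N ^ (n - k)).mulVecLin v = 0 := by
        simpa [Matrix.mulVecLin_apply] using h0
      rw [← hc, map_sum] at e1
      rw [← e1]
      apply Finset.sum_congr rfl
      intro j _
      rw [map_smul, Matrix.mulVecLin_apply, Matrix.mulVec_single]
      congr 1
      funext i
      rw [MulOpposite.op_one, one_smul]
      rfl
    have hc0 := Fintype.linearIndependent_iff.mp (hgen k hk1 hk2) c h1
    have : v = 0 := by
      rw [← hc]
      apply Finset.sum_eq_zero
      intro j _
      rw [hc0 j, zero_smul]
    simp [this]
  have hsup : ∀ k : ℕ, 1 ≤ k → k ≤ n - 1 → Fk k ⊔ U k = ⊤ := by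
    intro k hk1 hk2
    apply Submodule.eq_top_of_finrank_eq
    have h1 := Submodule.finrank_sup_add_finrank_inf_eq (Fk k) (U k)
    rw [hFU k hk1 hk2, hFk_rank k (by omega), hU_rank k (by omega), finrank_bot] at h1
    rw [Module.finrank_fin_fun]
    omega
  have hFkn_top : Fk n = ⊤ := by
    apply Submodule.eq_top_of_finrank_eq
    rw [hFk_rank n le_rfl, Module.finrank_fin_fun]
  have hexists : ∀ x : Fin n, ∃ gx : Fin n → ℂ, gx ∈ U (x.1 + 1) ∧ u x.1 - gx ∈ Fk (x.1 + 1) := by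
    intro x
    rcases Nat.lt_or_ge (x.1 + 1) n with hx | hx
    · have hsx := hsup (x.1 + 1) (by omega) (by omega)
      have hmem : u x.1 ∈ Fk (x.1 + 1) ⊔ U (x.1 + 1) := hsx ▸ mem_top
      obtain ⟨f, hf, gx, hg, hfg⟩ := Submodule.mem_sup.mp hmem
      have : u x.1 - gx = f := by rw [← hfg]; abel
      exact ⟨gx, hg, this ▸ hf⟩
    · have hxn : x.1 + 1 = n := by have := x.2; omega
      refine ⟨0, zero_mem _, ?_⟩
      rw [hxn, hFkn_top]
      exact mem_top
  choose g hgU hgF using hexists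
  set w0 : Fin n → (Fin n → ℂ) := fun x => u x.1 - g x with hw0
  have hNU : ∀ m : ℕ, ∀ v : Fin n → ℂ, v ∈ U m → N.mulVec v ∈ U (m + 1) := by
    intro m v hv
    have hle : U m ≤ Submodule.comap N.mulVecLin (U (m + 1)) := by
      conv_lhs => rw [hU]
      apply span_le.2
      rintro x ⟨i, hi, rfl⟩
      simp only [SetLike.mem_coe, Submodule.mem_comap, Matrix.mulVecLin_apply]
      rw [huN1]
      rcases Nat.lt_or_ge (i.1 + 1) n with h | h
      · exact subset_span ⟨⟨i.1 + 1, h⟩, by show m + 1 ≤ i.1 + 1; omega, rfl⟩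
      · have hz : u (i.1 + 1) = 0 := by
          rw [hu]
          simp only []
          rw [hpow0 _ (by omega), Matrix.zero_mulVec]
        rw [hz]
        exact zero_mem _
    exact hle hv
  set W : ℕ → Submodule ℂ (Fin n → ℂ) :=
    fun m => span ℂ {v : Fin n → ℂ | ∃ j : Fin n, m ≤ j.1 ∧ v = w0 j} with hW
  have hWmono : ∀ m m' : ℕ, m ≤ m' → W m' ≤ W m := by
    intro m m' h
    apply span_mono
    rintro v ⟨j, hj, rfl⟩
    exact ⟨j, by omega, rfl⟩
  have hUW : ∀ d m : ℕ, n ≤ m + d → U m ≤ W m := by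
    intro d
    induction d with
    | zero =>
      intro m hm
      rw [hU]
      apply span_le.2
      rintro v ⟨i, hi, rfl⟩
      have := i.2
      omega
    | succ d ih =>
      intro m hm
      rw [hU]
      apply span_le.2
      rintro v ⟨i, hi, rfl⟩
      have h1 : w0 i ∈ W m := subset_span ⟨i, hi, rfl⟩
      have h2 : g i ∈ W m := by
        have h2' := ih (i.1 + 1) (by have := i.2; omega)
        exact hWmono m (i.1 + 1) (by omega) (h2' (hgU i))
      have h3 : u i.1 = w0 i + g i := by rw [hw0]; simp
      rw [SetLike.mem_coe, h3]
      exact add_mem h1 h2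
  have hutop : span ℂ (Set.range fun i : Fin n => u i.1) = ⊤ :=
    hu_li.span_eq_top_of_card_eq_finrank (by rw [Fintype.card_fin, Module.finrank_fin_fun])
  have htop : ⊤ ≤ span ℂ (Set.range w0) := by
    rw [← hutop]
    have h1 : span ℂ (Set.range fun i : Fin n => u i.1) ≤ U 0 := by
      apply span_mono
      rintro v ⟨i, rfl⟩
      exact ⟨i, by omega, rfl⟩
    have h2 : W 0 ≤ span ℂ (Set.range w0) := by
      apply span_mono
      rintro v ⟨j, _, rfl⟩
      exact ⟨j, rfl⟩
    exact le_trans h1 (le_trans (hUW n 0 (by omega)) h2)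
  have hcard : Fintype.card (Fin n) = finrank ℂ (Fin n → ℂ) := by
    rw [Fintype.card_fin, Module.finrank_fin_fun]
  have hw_li : LinearIndependent ℂ w0 := by
    have := (basisOfTopLeSpanOfCardEqFinrank w0 htop hcard).linearIndependent
    rwa [coe_basisOfTopLeSpanOfCardEqFinrank] at this
  refine ⟨basisOfTopLeSpanOfCardEqFinrank w0 htop hcard, ?_, ?_, ?_⟩
  · intro k hk
    simp only [coe_basisOfTopLeSpanOfCardEqFinrank]
    have hle : span ℂ {v : Fin n → ℂ | ∃ j : Fin n, j.1 < k ∧ v = w0 j} ≤ Fk k := by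
      apply span_le.2
      rintro v ⟨j, hj, rfl⟩
      exact SetLike.mem_coe.2 (hFk_mono (j.1 + 1) k (by omega) (hgF j))
    have hsetw : {v : Fin n → ℂ | ∃ j : Fin n, j.1 < k ∧ v = w0 j} =
        Set.range (w0 ∘ Fin.castLE hk) := by
      ext v
      constructor
      · rintro ⟨j, hj, rfl⟩
        exact ⟨⟨j.1, hj⟩, rfl⟩
      · rintro ⟨j, rfl⟩
        exact ⟨Fin.castLE hk j, j.2, rfl⟩
    have hrk : finrank ℂ (span ℂ {v : Fin n → ℂ | ∃ j : Fin n, j.1 < k ∧ v = w0 j}) = k := by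
      rw [hsetw, finrank_span_eq_card (hw_li.comp (Fin.castLE hk) (Fin.castLE_injective hk)),
        Fintype.card_fin]
    have := Submodule.eq_of_le_of_finrank_le hle (by rw [hrk, hFk_rank k hk])
    rw [this, hFk]
  · intro x hx
    simp only [coe_basisOfTopLeSpanOfCardEqFinrank]
    have hNg : N.mulVec (g x) ∈ U (x.1 + 2) := hNU (x.1 + 1) (g x) (hgU x)
    have hgx1 : g ⟨x.1 + 1, hx⟩ ∈ U (x.1 + 2) := hgU ⟨x.1 + 1, hx⟩
    have hkey : N.mulVec (w0 x) - w0 ⟨x.1 + 1, hx⟩ = g ⟨x.1 + 1, hx⟩ - N.mulVec (g x) := by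
      rw [hw0]
      simp only []
      rw [Matrix.mulVec_sub, huN1]
      abel
    rw [hkey]
    have hsub : U (x.1 + 2) ≤ span ℂ {v : Fin n → ℂ | ∃ j : Fin n, x.1 + 1 < j.1 ∧ v = w0 j} := by
      refine le_trans (hUW n (x.1 + 2) (by omega)) ?_
      rw [hW]
      apply span_mono
      rintro v ⟨j, hj, rfl⟩
      exact ⟨j, by omega, rfl⟩
    exact hsub (sub_mem hgx1 hNg)
  · intro x hxn
    simp only [coe_basisOfTopLeSpanOfCardEqFinrank]
    have hg0 : g x = 0 := by
      have h1 : U (x.1 + 1) ≤ ⊥ := by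
        rw [hU]
        apply span_le.2
        rintro v ⟨i, hi, rfl⟩
        have := i.2
        omega
      have := h1 (hgU x)
      simpa using this
    rw [hw0]
    simp only [hg0, sub_zero]
    rw [huN1, hxn, hu]
    simp only []
    rw [hNn, Matrix.zero_mulVec]
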